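/- Under the setting of the finite-horizon rate bound for Algorithm 2 — F : ℝ^d → ℝ differentiable, μ-smooth, bounded below with Δ̂ := F(θ₀) − inf F; step size η = η₀K^{-1/2}; iterates θ_{k+1} = θ_k − η g_k for k = 0, …, K−1 with E[g_k | 𝓗_k] = b₁∇F(θ_k) almost surely and E[‖g_k‖² | 𝓗_k] ≤ C₂ almost surely — if ε, β > 0 and K ≥ (1/(ε²β²)) (Δ̂/(b₁η₀) + η₀μC₂/(2b₁))², then P( min_{0 ≤ k ≤ K−1} ‖∇F(θ_k)‖² < ε ) ≥ 1 − β. -/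

import Mathlib

set_option maxHeartbeats 1000000

open MeasureTheory Filter

theorem condexp_clm_comm {α E G : Type*}
    [NormedAddCommGroup E] [NormedSpace ℝ E] [CompleteSpace E]
    [NormedAddCommGroup G] [NormedSpace ℝ G] [CompleteSpace G]
    {m m0 : MeasurableSpace α} {μ : Measure α} [IsFiniteMeasure μ]
    (hm : m ≤ m0) (L : E →L[ℝ] G) {f : α → E} (hf : Integrable f μ) :
    (fun ω => L ((μ[f|m]) ω)) =ᵐ[μ] μ[fun ω => L (f ω)|m] := by
  haveI : SigmaFinite (μ.trim hm) := by
    haveI := isFiniteMeasure_trim (μ := μ) hm; infer_instance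
  refine ae_eq_condExp_of_forall_setIntegral_eq hm (L.integrable_comp hf)
    (fun s _ _ => (L.integrable_comp integrable_condExp).integrableOn)
    (fun s hs _ => ?_)
    ((L.continuous.comp_stronglyMeasurable stronglyMeasurable_condExp).aestronglyMeasurable)
  rw [L.integral_comp_comm integrable_condExp.integrableOn,
    L.integral_comp_comm hf.integrableOn, setIntegral_condExp hm hf hs]

theorem descent_lemma {E : Type*} [NormedAddCommGroup E] [InnerProductSpace ℝ E]
    [CompleteSpace E]
    (F : E → ℝ) (μₛ : ℝ) (hμₛ : 0 ≤ μₛ) (hdiff : Differentiable ℝ F)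
    (hsmooth : ∀ x y : E, ‖gradient F x - gradient F y‖ ≤ μₛ * ‖x - y‖)
    (x y : E) :
    F y ≤ F x + inner ℝ (gradient F x) (y - x) + μₛ / 2 * ‖y - x‖ ^ 2 := by
  set v := y - x with hv
  have hgradcont : Continuous (gradient F) := by
    have : LipschitzWith μₛ.toNNReal (gradient F) := by
      apply LipschitzWith.of_dist_le_mul
      intro a b
      rw [dist_eq_norm, dist_eq_norm]
      simpa [Real.coe_toNNReal _ hμₛ] using hsmooth a b
    exact this.continuous
  have hc : ∀ t : ℝ, HasDerivAt (fun t : ℝ => x + t • v) v t := by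
    intro t
    simpa using ((hasDerivAt_id t).smul_const v).const_add x
  have hφ : ∀ t : ℝ, HasDerivAt (fun t : ℝ => F (x + t • v))
      (inner ℝ (gradient F (x + t • v)) v) t := by
    intro t
    have hF : HasFDerivAt F ((InnerProductSpace.toDual ℝ E) (gradient F (x + t • v)))
        (x + t • v) := (hdiff _).hasGradientAt.hasFDerivAt
    have h := hF.comp_hasDerivAt t (hc t)
    exact h
  have hcont : Continuous fun t : ℝ => (inner ℝ (gradient F (x + t • v)) v : ℝ) := by
    exact (Continuous.inner (hgradcont.comp (by continuity)) continuous_const)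
  have hFTC : ∫ t in (0:ℝ)..1, (inner ℝ (gradient F (x + t • v)) v : ℝ) =
      F (x + (1:ℝ) • v) - F (x + (0:ℝ) • v) := by
    exact intervalIntegral.integral_eq_sub_of_hasDerivAt (fun t _ => hφ t)
      (hcont.intervalIntegrable 0 1)
  have hbound : ∀ t ∈ Set.Icc (0:ℝ) 1,
      (inner ℝ (gradient F (x + t • v)) v : ℝ) ≤ inner ℝ (gradient F x) v + μₛ * t * ‖v‖ ^ 2 := by
    intro t ht
    have h1 : (inner ℝ (gradient F (x + t • v)) v : ℝ) - inner ℝ (gradient F x) v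
        = inner ℝ (gradient F (x + t • v) - gradient F x) v := by
      rw [inner_sub_left]
    have h2 : (inner ℝ (gradient F (x + t • v) - gradient F x) v : ℝ)
        ≤ ‖gradient F (x + t • v) - gradient F x‖ * ‖v‖ :=
      real_inner_le_norm _ _
    have h3 : ‖gradient F (x + t • v) - gradient F x‖ ≤ μₛ * (t * ‖v‖) := by
      have := hsmooth (x + t • v) x
      simpa [norm_smul, abs_of_nonneg ht.1, mul_assoc] using this
    nlinarith [norm_nonneg v, mul_le_mul_of_nonneg_right h3 (norm_nonneg v)]
  have hint : ∫ t in (0:ℝ)..1, (inner ℝ (gradient F x) v + μₛ * t * ‖v‖ ^ 2 : ℝ)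
      = inner ℝ (gradient F x) v + μₛ / 2 * ‖v‖ ^ 2 := by
    have h1 : IntervalIntegrable (fun _ : ℝ => (inner ℝ (gradient F x) v : ℝ))
        MeasureTheory.volume 0 1 := intervalIntegrable_const
    have h2 : IntervalIntegrable (fun t : ℝ => μₛ * t * ‖v‖ ^ 2)
        MeasureTheory.volume 0 1 := (Continuous.intervalIntegrable (by continuity) 0 1)
    rw [intervalIntegral.integral_add h1 h2]
    simp only [intervalIntegral.integral_const, smul_eq_mul, sub_zero, one_mul]
    have : ∫ t in (0:ℝ)..1, (μₛ * t * ‖v‖ ^ 2 : ℝ)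
        = (μₛ * ‖v‖ ^ 2) * ∫ t in (0:ℝ)..1, t := by
      rw [← intervalIntegral.integral_const_mul]
      congr 1; ext t; ring
    rw [this, integral_id]
    ring
  have hmono : ∫ t in (0:ℝ)..1, (inner ℝ (gradient F (x + t • v)) v : ℝ)
      ≤ ∫ t in (0:ℝ)..1, (inner ℝ (gradient F x) v + μₛ * t * ‖v‖ ^ 2 : ℝ) := by
    apply intervalIntegral.integral_mono_on zero_le_one
      (hcont.intervalIntegrable 0 1)
      (Continuous.intervalIntegrable (by continuity) 0 1)
    exact hbound
  have hy : x + (1:ℝ) • v = y := by rw [hv]; simp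
  have hx : x + (0:ℝ) • v = x := by simp
  rw [hy, hx] at hFTC
  linarith [hFTC ▸ hmono, hint ▸ hmono]

/-- High-probability sample-path convergence of EFOFL (Theorem 4, probability part):
if `K ≥ (1/(ε²β²)) (Δ̂/(b₁η₀) + η₀μₛC₂/(2b₁))²` with `Δ̂ = F(θ₀) − inf F`, then
`P(min_{0 ≤ k ≤ K−1} ‖∇F(θ_k)‖² < ε) ≥ 1 − β`. -/
theorem efofl_high_probability
    {d : ℕ} {Ω : Type*} {m0 : MeasurableSpace Ω} (μ : Measure Ω) [IsProbabilityMeasure μ]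
    (ℱ : Filtration ℕ m0)
    (F : EuclideanSpace ℝ (Fin d) → ℝ) (μₛ : ℝ)
    (hdiff : Differentiable ℝ F)
    (hsmooth : ∀ x y : EuclideanSpace ℝ (Fin d),
      ‖gradient F x - gradient F y‖ ≤ μₛ * ‖x - y‖)
    (hbdd : BddBelow (Set.range F))
    (K : ℕ) (hK : 1 ≤ K)
    (b₁ C₂ η₀ : ℝ) (hb₁ : 0 < b₁) (hC₂ : 0 < C₂) (hη₀ : 0 < η₀)
    (η : ℝ) (hηdef : η = η₀ * (K : ℝ) ^ (-(1 / 2 : ℝ)))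
    (θ : ℕ → Ω → EuclideanSpace ℝ (Fin d)) (hadapted : StronglyAdapted ℱ θ)
    (θ₀ : EuclideanSpace ℝ (Fin d)) (hθ0 : ∀ ω, θ 0 ω = θ₀)
    (g : ℕ → Ω → EuclideanSpace ℝ (Fin d)) (hgL2 : ∀ k, MemLp (g k) 2 μ)
    (hupdate : ∀ k < K, ∀ ω, θ (k + 1) ω = θ k ω - η • g k ω)
    (hmean : ∀ k < K, μ[g k | ℱ k] =ᵐ[μ] fun ω => b₁ • gradient F (θ k ω))
    (hsq : ∀ k < K, ∀ᵐ ω ∂μ, (μ[(fun ω' => ‖g k ω'‖ ^ 2) | ℱ k]) ω ≤ C₂)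
    (ε β : ℝ) (hε : 0 < ε) (hβ : 0 < β)
    (hKbig : (K : ℝ) ≥ 1 / (ε ^ 2 * β ^ 2) *
      ((F θ₀ - sInf (Set.range F)) / (b₁ * η₀) + η₀ * μₛ * C₂ / (2 * b₁)) ^ 2) :
    ENNReal.ofReal (1 - β) ≤
      μ {ω | ∃ k < K, ‖gradient F (θ k ω)‖ ^ 2 < ε} := by
  -- trivial case β ≥ 1
  rcases le_or_gt 1 β with hβ1 | hβ1
  · have : ENNReal.ofReal (1 - β) = 0 := by
      rw [ENNReal.ofReal_eq_zero]; linarith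
    rw [this]; exact zero_le
  -- trivial case d = 0
  rcases Nat.eq_zero_or_pos d with hd | hd
  · subst hd
    have hset : {ω | ∃ k < K, ‖gradient F (θ k ω)‖ ^ 2 < ε} = Set.univ := by
      ext ω
      simp only [Set.mem_setOf_eq, Set.mem_univ, iff_true]
      refine ⟨0, hK, ?_⟩
      have h0 : gradient F (θ 0 ω) = 0 := Subsingleton.elim _ _
      rw [h0]; simpa using hε
    rw [hset, measure_univ]
    exact ENNReal.ofReal_le_one.mpr (by linarith)
  -- main case: μₛ ≥ 0
  have hμₛ : 0 ≤ μₛ := by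
    have i0 : Fin d := ⟨0, hd⟩
    have h := hsmooth 0 (EuclideanSpace.single i0 1)
    rw [zero_sub, norm_neg, EuclideanSpace.norm_single] at h
    simp only [norm_one, mul_one] at h
    exact le_trans (norm_nonneg _) h
  have hgradcont : Continuous (gradient F) := by
    have : LipschitzWith μₛ.toNNReal (gradient F) := by
      apply LipschitzWith.of_dist_le_mul
      intro a b
      rw [dist_eq_norm, dist_eq_norm]
      simpa [Real.coe_toNNReal _ hμₛ] using hsmooth a b
    exact this.continuous
  have hθsm : ∀ k, StronglyMeasurable (θ k) := fun k => (hadapted k).mono (ℱ.le k)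
  -- θ k ∈ L²
  have hθL2 : ∀ k, k ≤ K → MemLp (θ k) 2 μ := by
    intro k
    induction k with
    | zero =>
      intro _
      exact (memLp_const θ₀).ae_eq (Eventually.of_forall fun ω => (hθ0 ω).symm)
    | succ k ih =>
      intro hk1
      have hkK : k < K := hk1
      have h1 : MemLp (θ k - η • g k) 2 μ := (ih hkK.le).sub ((hgL2 k).const_smul η)
      exact h1.ae_eq (Eventually.of_forall fun ω => (hupdate k hkK ω).symm)
  -- gradients measurable and L²
  have hvsm : ∀ k, StronglyMeasurable[ℱ k] (fun ω => gradient F (θ k ω)) := fun k =>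
    hgradcont.comp_stronglyMeasurable (hadapted k)
  have hvL2 : ∀ k, k ≤ K → MemLp (fun ω => gradient F (θ k ω)) 2 μ := by
    intro k hk
    have hb : MemLp (fun ω => ‖gradient F θ₀‖ + μₛ * ‖θ k ω - θ₀‖) 2 μ :=
      (memLp_const (μ := μ) (p := 2) ‖gradient F θ₀‖).add (((hθL2 k hk).sub (memLp_const θ₀)).norm.const_mul μₛ)
    refine hb.of_le ((hvsm k).mono (ℱ.le k)).aestronglyMeasurable
      (Eventually.of_forall fun ω => ?_)
    have h1 : ‖gradient F (θ k ω)‖ - ‖gradient F θ₀‖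
        ≤ ‖gradient F (θ k ω) - gradient F θ₀‖ := norm_sub_norm_le _ _
    have h2 := hsmooth (θ k ω) θ₀
    have h3 : 0 ≤ μₛ * ‖θ k ω - θ₀‖ := by positivity
    rw [Real.norm_eq_abs]
    rw [abs_of_nonneg (by positivity)]
    linarith
  have hv2int : ∀ k, k ≤ K → Integrable (fun ω => ‖gradient F (θ k ω)‖ ^ 2) μ := fun k hk =>
    (memLp_two_iff_integrable_sq_norm (hvL2 k hk).aestronglyMeasurable).mp (hvL2 k hk)
  have hg2int : ∀ k, Integrable (fun ω => ‖g k ω‖ ^ 2) μ := fun k =>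
    (memLp_two_iff_integrable_sq_norm (hgL2 k).aestronglyMeasurable).mp (hgL2 k)
  -- inner products integrable
  have hinnerint : ∀ k, k ≤ K →
      Integrable (fun ω => (inner ℝ (gradient F (θ k ω)) (g k ω) : ℝ)) μ := by
    intro k hk
    have hmul : MemLp (fun ω => ‖gradient F (θ k ω)‖ • ‖g k ω‖) 1 μ :=
      (hgL2 k).norm.smul (hvL2 k hk).norm (r := 1)
    refine (hmul.integrable le_rfl).mono'
      (AEStronglyMeasurable.inner ((hvsm k).mono (ℱ.le k)).aestronglyMeasurable
        (hgL2 k).aestronglyMeasurable)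
      (Eventually.of_forall fun ω => ?_)
    simp only [smul_eq_mul]
    exact norm_inner_le_norm _ _
  -- F ∘ θ k integrable
  have hFint : ∀ k, k ≤ K → Integrable (fun ω => F (θ k ω)) μ := by
    intro k hk
    have hsmF : AEStronglyMeasurable (fun ω => F (θ k ω)) μ :=
      (hdiff.continuous.comp_stronglyMeasurable (hθsm k)).aestronglyMeasurable
    have hsub : MemLp (fun ω => θ k ω - θ₀) 2 μ := (hθL2 k hk).sub (memLp_const θ₀)
    have hint1 : Integrable (fun ω => ‖θ k ω - θ₀‖) μ := hsub.norm.integrable one_le_two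
    have hint2 : Integrable (fun ω => ‖θ k ω - θ₀‖ ^ 2) μ :=
      (memLp_two_iff_integrable_sq_norm hsub.aestronglyMeasurable).mp hsub
    have hbnd : Integrable (fun ω =>
        |F θ₀| + (‖gradient F θ₀‖ * ‖θ k ω - θ₀‖ + 2 * μₛ * ‖θ k ω - θ₀‖ ^ 2)) μ :=
      (integrable_const _).add ((hint1.const_mul _).add (hint2.const_mul _))
    refine hbnd.mono' hsmF (Eventually.of_forall fun ω => ?_)
    have hd1 := descent_lemma F μₛ hμₛ hdiff hsmooth θ₀ (θ k ω)
    have hd2 := descent_lemma F μₛ hμₛ hdiff hsmooth (θ k ω) θ₀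
    have hi1 := abs_real_inner_le_norm (gradient F θ₀) (θ k ω - θ₀)
    have hi2 := abs_real_inner_le_norm (gradient F (θ k ω)) (θ₀ - θ k ω)
    have hnx : ‖gradient F (θ k ω)‖ ≤ ‖gradient F θ₀‖ + μₛ * ‖θ k ω - θ₀‖ := by
      have h1 := norm_sub_norm_le (gradient F (θ k ω)) (gradient F θ₀)
      have h2 := hsmooth (θ k ω) θ₀
      linarith
    have hrev : ‖θ₀ - θ k ω‖ = ‖θ k ω - θ₀‖ := norm_sub_rev _ _
    rw [hrev] at hd2 hi2
    have habs1 : (inner ℝ (gradient F θ₀) (θ k ω - θ₀) : ℝ)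
        ≤ ‖gradient F θ₀‖ * ‖θ k ω - θ₀‖ := le_trans (le_abs_self _) hi1
    have habs2 : -(‖gradient F (θ k ω)‖ * ‖θ k ω - θ₀‖)
        ≤ (inner ℝ (gradient F (θ k ω)) (θ₀ - θ k ω) : ℝ) := neg_le_of_abs_le hi2
    have habs2' : (inner ℝ (gradient F (θ k ω)) (θ₀ - θ k ω) : ℝ)
        ≤ ‖gradient F (θ k ω)‖ * ‖θ k ω - θ₀‖ := le_trans (le_abs_self _) hi2
    rw [Real.norm_eq_abs, abs_le]
    constructor
    · have h5 := neg_abs_le (F θ₀)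
      have h6 := mul_le_mul_of_nonneg_right hnx (norm_nonneg (θ k ω - θ₀))
      nlinarith [norm_nonneg (θ k ω - θ₀), sq_nonneg (‖θ k ω - θ₀‖)]
    · have := le_abs_self (F θ₀)
      nlinarith [norm_nonneg (θ k ω - θ₀)]
  -- per-step inequality
  have hstep : ∀ k, k < K →
      η * b₁ * ∫ ω, ‖gradient F (θ k ω)‖ ^ 2 ∂μ
        ≤ (∫ ω, F (θ k ω) ∂μ) - (∫ ω, F (θ (k + 1) ω) ∂μ) + μₛ * η ^ 2 / 2 * C₂ := by
    intro k hkK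
    have hm := ℱ.le k
    haveI : SigmaFinite (μ.trim hm) := by
      haveI := isFiniteMeasure_trim (μ := μ) hm; infer_instance
    -- pointwise descent
    have hpt : ∀ ω, F (θ (k + 1) ω) ≤ F (θ k ω)
        - η * inner ℝ (gradient F (θ k ω)) (g k ω)
        + μₛ * η ^ 2 / 2 * ‖g k ω‖ ^ 2 := by
      intro ω
      have hdl := descent_lemma F μₛ hμₛ hdiff hsmooth (θ k ω) (θ (k + 1) ω)
      have hde : θ (k + 1) ω - θ k ω = -(η • g k ω) := by
        rw [hupdate k hkK ω]; abel
      rw [hde] at hdl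
      have h1 : (inner ℝ (gradient F (θ k ω)) (-(η • g k ω)) : ℝ)
          = -(η * inner ℝ (gradient F (θ k ω)) (g k ω)) := by
        rw [inner_neg_right, real_inner_smul_right]
      have h2 : ‖-(η • g k ω)‖ ^ 2 = η ^ 2 * ‖g k ω‖ ^ 2 := by
        rw [norm_neg, norm_smul, mul_pow, Real.norm_eq_abs, sq_abs]
      rw [h1, h2] at hdl
      linarith
    have hI1 := hFint k hkK.le
    have hI2 := hinnerint k hkK.le
    have hI3 := hg2int k
    have hEmono : ∫ ω, F (θ (k + 1) ω) ∂μ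
        ≤ ∫ ω, (F (θ k ω) - η * inner ℝ (gradient F (θ k ω)) (g k ω)
            + μₛ * η ^ 2 / 2 * ‖g k ω‖ ^ 2) ∂μ :=
      integral_mono (hFint (k + 1) hkK)
        ((hI1.sub (hI2.const_mul η)).add (hI3.const_mul _)) hpt
    have hEsplit : ∫ ω, (F (θ k ω) - η * inner ℝ (gradient F (θ k ω)) (g k ω)
            + μₛ * η ^ 2 / 2 * ‖g k ω‖ ^ 2) ∂μ
        = (∫ ω, F (θ k ω) ∂μ) - η * (∫ ω, (inner ℝ (gradient F (θ k ω)) (g k ω) : ℝ) ∂μ)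
          + μₛ * η ^ 2 / 2 * (∫ ω, ‖g k ω‖ ^ 2 ∂μ) := by
      have hf1 : Integrable (fun ω => F (θ k ω)
          - η * inner ℝ (gradient F (θ k ω)) (g k ω)) μ := hI1.sub (hI2.const_mul η)
      have hf2 : Integrable (fun ω => μₛ * η ^ 2 / 2 * ‖g k ω‖ ^ 2) μ := hI3.const_mul _
      have hf3 : Integrable (fun ω => η * (inner ℝ (gradient F (θ k ω)) (g k ω) : ℝ)) μ :=
        hI2.const_mul η
      rw [integral_add hf1 hf2, integral_sub hI1 hf3, integral_const_mul, integral_const_mul]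
    -- second moment bound
    have hg2 : ∫ ω, ‖g k ω‖ ^ 2 ∂μ ≤ C₂ := by
      have h1 : ∫ ω, ‖g k ω‖ ^ 2 ∂μ = ∫ ω, (μ[(fun ω' => ‖g k ω'‖ ^ 2)|ℱ k]) ω ∂μ :=
        (integral_condExp hm).symm
      rw [h1]
      calc ∫ ω, (μ[(fun ω' => ‖g k ω'‖ ^ 2)|ℱ k]) ω ∂μ
          ≤ ∫ _, C₂ ∂μ := integral_mono_ae integrable_condExp (integrable_const _) (hsq k hkK)
        _ = C₂ := by simp
    -- inner product identity via coordinates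
    have hinner_eq : ∫ ω, (inner ℝ (gradient F (θ k ω)) (g k ω) : ℝ) ∂μ
        = b₁ * ∫ ω, ‖gradient F (θ k ω)‖ ^ 2 ∂μ := by
      have hvLi : ∀ i : Fin d, MemLp (fun ω => gradient F (θ k ω) i) 2 μ := fun i =>
        (EuclideanSpace.proj (𝕜 := ℝ) i).comp_memLp' (hvL2 k hkK.le)
      have hgLi : ∀ i : Fin d, MemLp (fun ω => g k ω i) 2 μ := fun i =>
        (EuclideanSpace.proj (𝕜 := ℝ) i).comp_memLp' (hgL2 k)
      have hprod_int : ∀ i : Fin d,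
          Integrable (fun ω => gradient F (θ k ω) i * g k ω i) μ := fun i =>
        (((hgLi i).smul (hvLi i) (r := 1)).integrable le_rfl)
      have hvv_int : ∀ i : Fin d,
          Integrable (fun ω => gradient F (θ k ω) i * gradient F (θ k ω) i) μ := fun i =>
        (((hvLi i).smul (hvLi i) (r := 1)).integrable le_rfl)
      have hgcond : ∀ i : Fin d, (μ[(fun ω => g k ω i)|ℱ k])
          =ᵐ[μ] fun ω => b₁ * gradient F (θ k ω) i := by
        intro i
        have h1 := condexp_clm_comm hm (EuclideanSpace.proj (𝕜 := ℝ) i)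
          ((hgL2 k).integrable one_le_two)
        have h2 : (fun ω => (EuclideanSpace.proj (𝕜 := ℝ) i) ((μ[g k|ℱ k]) ω))
            =ᵐ[μ] fun ω => b₁ * gradient F (θ k ω) i := by
          filter_upwards [hmean k hkK] with ω hω
          have hpr : (EuclideanSpace.proj (𝕜 := ℝ) i) ((μ[g k|ℱ k]) ω)
              = (μ[g k|ℱ k]) ω i := rfl
          rw [hpr, hω]
          simp [PiLp.smul_apply, smul_eq_mul]
        exact (h1.symm.trans h2)
      have hcoordint : ∀ i : Fin d,
          ∫ ω, gradient F (θ k ω) i * g k ω i ∂μ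
            = b₁ * ∫ ω, gradient F (θ k ω) i * gradient F (θ k ω) i ∂μ := by
        intro i
        have hvism : StronglyMeasurable[ℱ k] (fun ω => gradient F (θ k ω) i) :=
          (EuclideanSpace.proj (𝕜 := ℝ) i).continuous.comp_stronglyMeasurable (hvsm k)
        have hpull : μ[(fun ω => gradient F (θ k ω) i * g k ω i)|ℱ k]
            =ᵐ[μ] (fun ω => gradient F (θ k ω) i) * μ[(fun ω => g k ω i)|ℱ k] :=
          condExp_mul_of_stronglyMeasurable_left hvism (hprod_int i) ((hgLi i).integrable one_le_two)
        calc ∫ ω, gradient F (θ k ω) i * g k ω i ∂μ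
            = ∫ ω, (μ[(fun ω => gradient F (θ k ω) i * g k ω i)|ℱ k]) ω ∂μ :=
              (integral_condExp hm).symm
          _ = ∫ ω, gradient F (θ k ω) i * (μ[(fun ω => g k ω i)|ℱ k]) ω ∂μ :=
              integral_congr_ae (hpull.mono fun ω hω => hω)
          _ = ∫ ω, gradient F (θ k ω) i * (b₁ * gradient F (θ k ω) i) ∂μ := by
              refine integral_congr_ae ?_
              filter_upwards [hgcond i] with ω hω
              rw [hω]
          _ = b₁ * ∫ ω, gradient F (θ k ω) i * gradient F (θ k ω) i ∂μ := by
              rw [← integral_const_mul]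
              congr 1; ext ω; ring
      have hcoord : ∀ ω, (inner ℝ (gradient F (θ k ω)) (g k ω) : ℝ)
          = ∑ i : Fin d, gradient F (θ k ω) i * g k ω i := by
        intro ω
        rw [PiLp.inner_apply]
        simp [RCLike.inner_apply, conj_trivial, mul_comm]
      have hcoord2 : ∀ (w : EuclideanSpace ℝ (Fin d)), ‖w‖ ^ 2 = ∑ i, w i * w i := by
        intro w
        rw [← real_inner_self_eq_norm_sq, PiLp.inner_apply]
        simp [RCLike.inner_apply, conj_trivial, sq]
      calc ∫ ω, (inner ℝ (gradient F (θ k ω)) (g k ω) : ℝ) ∂μ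
          = ∫ ω, ∑ i : Fin d, gradient F (θ k ω) i * g k ω i ∂μ := by
            simp_rw [hcoord]
        _ = ∑ i : Fin d, ∫ ω, gradient F (θ k ω) i * g k ω i ∂μ :=
            integral_finset_sum _ fun i _ => hprod_int i
        _ = ∑ i : Fin d, b₁ * ∫ ω, gradient F (θ k ω) i * gradient F (θ k ω) i ∂μ :=
            Finset.sum_congr rfl fun i _ => hcoordint i
        _ = b₁ * ∑ i : Fin d, ∫ ω, gradient F (θ k ω) i * gradient F (θ k ω) i ∂μ := by
            rw [Finset.mul_sum]
        _ = b₁ * ∫ ω, ∑ i : Fin d, gradient F (θ k ω) i * gradient F (θ k ω) i ∂μ := by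
            rw [integral_finset_sum _ fun i _ => hvv_int i]
        _ = b₁ * ∫ ω, ‖gradient F (θ k ω)‖ ^ 2 ∂μ := by
            congr 1
            refine integral_congr_ae (Eventually.of_forall fun ω => ?_)
            exact (hcoord2 _).symm
      -- end hinner_eq
    rw [hEsplit, hinner_eq] at hEmono
    have hc : 0 ≤ μₛ * η ^ 2 / 2 := by positivity
    have := mul_le_mul_of_nonneg_left hg2 hc
    nlinarith [hEmono]
  -- telescoping
  have htel : ∀ n, n ≤ K →
      η * b₁ * ∑ k ∈ Finset.range n, ∫ ω, ‖gradient F (θ k ω)‖ ^ 2 ∂μ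
        ≤ F θ₀ - (∫ ω, F (θ n ω) ∂μ) + n * (μₛ * η ^ 2 / 2 * C₂) := by
    intro n
    induction n with
    | zero =>
      intro _
      have h0 : ∫ ω, F (θ 0 ω) ∂μ = F θ₀ := by
        rw [integral_congr_ae (Eventually.of_forall fun ω => by rw [hθ0 ω])]
        simp
      simp [h0]
    | succ n ih =>
      intro h
      have hn : n < K := h
      have h1 := hstep n hn
      have h2 := ih hn.le
      rw [Finset.sum_range_succ, mul_add]
      push_cast
      linarith
  have hlast : sInf (Set.range F) ≤ ∫ ω, F (θ K ω) ∂μ := by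
    have h1 : ∀ ω, sInf (Set.range F) ≤ F (θ K ω) := fun ω => csInf_le hbdd ⟨_, rfl⟩
    calc sInf (Set.range F) = ∫ _, sInf (Set.range F) ∂μ := by simp
      _ ≤ ∫ ω, F (θ K ω) ∂μ := integral_mono (integrable_const _) (hFint K le_rfl) h1
  have hSsum : η * b₁ * ∑ k ∈ Finset.range K, ∫ ω, ‖gradient F (θ k ω)‖ ^ 2 ∂μ
      ≤ (F θ₀ - sInf (Set.range F)) + K * (μₛ * η ^ 2 / 2 * C₂) := by
    have := htel K le_rfl
    linarith
  -- Markov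
  have hSnn : 0 ≤ᵐ[μ] fun ω => ∑ k ∈ Finset.range K, ‖gradient F (θ k ω)‖ ^ 2 :=
    Eventually.of_forall fun ω => Finset.sum_nonneg fun _ _ => sq_nonneg _
  have hSint : Integrable (fun ω => ∑ k ∈ Finset.range K, ‖gradient F (θ k ω)‖ ^ 2) μ :=
    integrable_finset_sum _ fun k hk => hv2int k (le_of_lt (Finset.mem_range.mp hk))
  have hES : ∫ ω, ∑ k ∈ Finset.range K, ‖gradient F (θ k ω)‖ ^ 2 ∂μ
      = ∑ k ∈ Finset.range K, ∫ ω, ‖gradient F (θ k ω)‖ ^ 2 ∂μ :=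
    integral_finset_sum _ fun k hk => hv2int k (le_of_lt (Finset.mem_range.mp hk))
  have hmar := mul_meas_ge_le_integral_of_nonneg hSnn hSint ((K : ℝ) * ε)
  set bad := {ω | (K : ℝ) * ε ≤ ∑ k ∈ Finset.range K, ‖gradient F (θ k ω)‖ ^ 2} with hbad
  set t := (μ bad).toReal with htdef
  have ht0 : 0 ≤ t := ENNReal.toReal_nonneg
  -- arithmetic: t ≤ β
  have hKpos : (0:ℝ) < K := by exact_mod_cast hK
  set s := Real.sqrt K with hsdef
  have hs0 : 0 < s := Real.sqrt_pos.mpr hKpos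
  have e2 : s ^ 2 = (K : ℝ) := Real.sq_sqrt hKpos.le
  have e1 : η * s = η₀ := by
    rw [hηdef, hsdef, Real.rpow_neg hKpos.le, ← Real.sqrt_eq_rpow]
    field_simp
  have hηpos : 0 < η := by
    have : η = η₀ / s := by rw [← e1]; field_simp
    rw [this]; positivity
  set Δ := F θ₀ - sInf (Set.range F) with hΔdef
  have hΔ0 : 0 ≤ Δ := by
    have := csInf_le hbdd ⟨θ₀, rfl⟩
    simp only [hΔdef]; linarith
  set A := Δ / (b₁ * η₀) + η₀ * μₛ * C₂ / (2 * b₁) with hAdef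
  have hA0 : 0 ≤ A := by
    have h1 : 0 ≤ Δ / (b₁ * η₀) := by positivity
    have h2 : 0 ≤ η₀ * μₛ * C₂ / (2 * b₁) := by positivity
    simp only [hAdef]; linarith
  have hAexp : b₁ * η₀ * A = Δ + μₛ * η₀ ^ 2 * C₂ / 2 := by
    rw [hAdef]; field_simp
  have hKbig' : A ^ 2 ≤ s ^ 2 * (ε ^ 2 * β ^ 2) := by
    rw [ge_iff_le, one_div, inv_mul_eq_div, div_le_iff₀ (by positivity)] at hKbig
    rw [e2]; linarith
  have hAs : A ≤ s * ε * β := by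
    nlinarith [hKbig', hA0, mul_pos (mul_pos hs0 hε) hβ]
  have htβ : t ≤ β := by
    have hchain : η * b₁ * ((K : ℝ) * ε * t) ≤ Δ + (K : ℝ) * (μₛ * η ^ 2 / 2 * C₂) := by
      have h1 : η * b₁ * ((K : ℝ) * ε * t)
          ≤ η * b₁ * ∫ ω, ∑ k ∈ Finset.range K, ‖gradient F (θ k ω)‖ ^ 2 ∂μ :=
        mul_le_mul_of_nonneg_left hmar (by positivity)
      rw [hES] at h1
      linarith [hSsum]
    have key : η₀ * b₁ * (s * ε * t) ≤ Δ + μₛ * η₀ ^ 2 * C₂ / 2 := by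
      calc η₀ * b₁ * (s * ε * t) = η * b₁ * ((K : ℝ) * ε * t) := by
            rw [← e1, ← e2]; ring
        _ ≤ Δ + (K : ℝ) * (μₛ * η ^ 2 / 2 * C₂) := hchain
        _ = Δ + μₛ * η₀ ^ 2 * C₂ / 2 := by rw [← e1, ← e2]; ring
    have h3 : b₁ * η₀ * A ≤ b₁ * η₀ * (s * ε * β) :=
      mul_le_mul_of_nonneg_left hAs (by positivity)
    have h2 : η₀ * b₁ * (s * ε * t) ≤ b₁ * η₀ * (s * ε * β) := by
      rw [hAexp] at h3; linarith
    have hpos : (0:ℝ) < η₀ * b₁ * s * ε := by positivity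
    nlinarith [h2, hpos]
  -- from Markov bound to the probability statement
  have hsub : {ω | ∃ k < K, ‖gradient F (θ k ω)‖ ^ 2 < ε}ᶜ ⊆ bad := by
    intro ω hω
    simp only [Set.mem_compl_iff, Set.mem_setOf_eq] at hω
    push_neg at hω
    show (K : ℝ) * ε ≤ ∑ k ∈ Finset.range K, ‖gradient F (θ k ω)‖ ^ 2
    calc (K : ℝ) * ε = ∑ _k ∈ Finset.range K, ε := by
          rw [Finset.sum_const, Finset.card_range, nsmul_eq_mul]
      _ ≤ ∑ k ∈ Finset.range K, ‖gradient F (θ k ω)‖ ^ 2 :=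
          Finset.sum_le_sum fun k hk => hω k (Finset.mem_range.mp hk)
  have hbadle : μ {ω | ∃ k < K, ‖gradient F (θ k ω)‖ ^ 2 < ε}ᶜ ≤ ENNReal.ofReal β := by
    refine le_trans (measure_mono hsub) ?_
    rw [← ENNReal.ofReal_toReal (measure_ne_top μ bad)]
    exact ENNReal.ofReal_le_ofReal htβ
  have huniv : (1 : ENNReal) ≤ μ {ω | ∃ k < K, ‖gradient F (θ k ω)‖ ^ 2 < ε}
      + μ {ω | ∃ k < K, ‖gradient F (θ k ω)‖ ^ 2 < ε}ᶜ := by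
    rw [← measure_univ (μ := μ), ← Set.union_compl_self
      {ω | ∃ k < K, ‖gradient F (θ k ω)‖ ^ 2 < ε}]
    exact measure_union_le _ _
  calc ENNReal.ofReal (1 - β) = 1 - ENNReal.ofReal β := by
        rw [ENNReal.ofReal_sub _ hβ.le, ENNReal.ofReal_one]
    _ ≤ 1 - μ {ω | ∃ k < K, ‖gradient F (θ k ω)‖ ^ 2 < ε}ᶜ := tsub_le_tsub_left hbadle 1
    _ ≤ μ {ω | ∃ k < K, ‖gradient F (θ k ω)‖ ^ 2 < ε} := by
        rw [tsub_le_iff_right]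
        calc (1:ENNReal) ≤ _ + _ := huniv
          _ ≤ _ := by exact le_rfl
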